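/- For every integer m ≥ 2 there exists a constant s_m > 0 such that for every s > s_m there exists N_0 = N_0(s,m) (independent of the sequence) with the following property: for every sequence (x_n)_{n≥1} ⊆ [0,1] and every N ≥ N_0 one has R_m(s/3, N) ≤ (6/s)·R_{m+1}(s, N). -/

import Mathlib

open Finset Filter MeasureTheory
open scoped Classical ENNReal NNReal

/-- Distance from `x` to the nearest integer. -/
noncomputable def nint (x : ℝ) : ℝ := |x - round x|

/-- Signed distance from `x` to the origin modulo 1. -/
noncomputable def sdist (x : ℝ) : ℝ :=
  if Int.fract x ≤ 1 / 2 then Int.fract x else Int.fract x - 1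

/-- Number of `k`-tuples of pairwise distinct indices in `{1,…,N}` whose rescaled signed
differences lie in the box `∏ r, [a r, b r]`. -/
noncomputable def corrBoxCount (x : ℕ → ℝ) (k N : ℕ) (a b : Fin (k - 1) → ℝ) : ℕ :=
  ((Fintype.piFinset fun _ : Fin k => Finset.Icc 1 N).filter fun i =>
    Function.Injective i ∧ ∀ r : Fin (k - 1),
      (N : ℝ) * sdist (x (i ⟨0, by have := r.2; omega⟩) - x (i ⟨r.1 + 1, by have := r.2; omega⟩))
        ∈ Set.Icc (a r) (b r)).card

/-- The sequence `x` (indexed by `n ≥ 1`) has Poissonian correlations of order `k`. -/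
def HasPoissonianCorr (x : ℕ → ℝ) (k : ℕ) : Prop :=
  ∀ a b : Fin (k - 1) → ℝ, (∀ r, a r ≤ b r) →
    Tendsto (fun N : ℕ => (corrBoxCount x k N a b : ℝ) / N) atTop
      (nhds (∏ r, (b r - a r)))

/-- The `k`-th order correlation function `R_k(s₁,…,s_{k-1},N)` (pairwise distinct indices). -/
noncomputable def Rcorr (x : ℕ → ℝ) (k N : ℕ) (s : Fin (k - 1) → ℝ) : ℝ :=
  (((Fintype.piFinset fun _ : Fin k => Finset.Icc 1 N).filter fun i =>
    Function.Injective i ∧ ∀ r : Fin (k - 1),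
      nint (x (i ⟨0, by have := r.2; omega⟩) - x (i ⟨r.1 + 1, by have := r.2; omega⟩))
        ≤ s r / N).card : ℝ) / N

/-- The `k`-th order correlation function `R_k^*(s₁,…,s_{k-1},N)` (indices not necessarily
distinct). -/
noncomputable def RcorrStar (x : ℕ → ℝ) (k N : ℕ) (s : Fin (k - 1) → ℝ) : ℝ :=
  (((Fintype.piFinset fun _ : Fin k => Finset.Icc 1 N).filter fun i =>
    ∀ r : Fin (k - 1),
      nint (x (i ⟨0, by have := r.2; omega⟩) - x (i ⟨r.1 + 1, by have := r.2; omega⟩))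
        ≤ s r / N).card : ℝ) / N

private lemma nint_le_abs (z : ℝ) (k : ℤ) : nint z ≤ |z - k| := by
  unfold nint
  rcases eq_or_ne k (round z) with rfl | hk
  · rfl
  · have h1 : |z - round z| ≤ 1 / 2 := abs_sub_round z
    have h2 : (1 : ℝ) ≤ |(k : ℝ) - (round z : ℝ)| := by
      have hne : k - round z ≠ 0 := sub_ne_zero.mpr hk
      have := Int.one_le_abs hne
      calc (1 : ℝ) = ((1 : ℤ) : ℝ) := by norm_num
        _ ≤ ((|k - round z| : ℤ) : ℝ) := by exact_mod_cast this
        _ = |(k : ℝ) - (round z : ℝ)| := by push_cast; ring_nf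
    have h3 : |(k : ℝ) - (round z : ℝ)| ≤ |z - round z| + |z - k| := by
      have := abs_sub (z - (round z : ℝ)) (z - (k : ℝ))
      calc |(k : ℝ) - (round z : ℝ)| = |(z - (round z : ℝ)) - (z - (k : ℝ))| := by ring_nf
        _ ≤ |z - (round z : ℝ)| + |z - (k : ℝ)| := abs_sub _ _
    linarith

private lemma fiber_card (k : ℕ) (B : Finset ℕ) (a : ℕ) (ha : a ∈ B) :
    (((Fintype.piFinset fun _ : Fin (k + 1) => B)).filter
        fun f => Function.Injective f ∧ f 0 = a).card
      = ((Fintype.piFinset fun _ : Fin k => B.erase a).filter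
        fun g => Function.Injective g).card := by
  apply Finset.card_nbij' (fun f => f ∘ Fin.succ) (fun g => Fin.cases a g)
  · intro f hf
    simp only [Finset.mem_coe, Finset.mem_filter, Fintype.mem_piFinset] at hf ⊢
    obtain ⟨hmem, hinj, h0⟩ := hf
    refine ⟨fun r => Finset.mem_erase.mpr ⟨fun heq => ?_, hmem _⟩,
      hinj.comp (Fin.succ_injective _)⟩
    exact (Fin.succ_ne_zero r) (hinj (heq.trans h0.symm))
  · intro g hg
    simp only [Finset.mem_coe, Finset.mem_filter, Fintype.mem_piFinset] at hg ⊢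
    obtain ⟨hmem, hinj⟩ := hg
    have hgne : ∀ r, g r ≠ a := fun r => (Finset.mem_erase.mp (hmem r)).1
    refine ⟨fun i => ?_, ?_, ?_⟩
    · induction i using Fin.cases with
      | zero => simpa using ha
      | succ r => simpa using (Finset.mem_erase.mp (hmem r)).2
    · intro p q hpq
      induction p using Fin.cases with
      | zero =>
        induction q using Fin.cases with
        | zero => rfl
        | succ r => simp only [Fin.cases_zero, Fin.cases_succ] at hpq
                    exact absurd hpq.symm (hgne r)
      | succ r =>
        induction q using Fin.cases with
        | zero => simp only [Fin.cases_zero, Fin.cases_succ] at hpq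
                  exact absurd hpq (hgne r)
        | succ r' => simp only [Fin.cases_succ] at hpq
                     exact congrArg Fin.succ (hinj hpq)
    · simp
  · intro f hf
    simp only [Finset.mem_coe, Finset.mem_filter] at hf
    funext i
    induction i using Fin.cases with
    | zero => simpa using hf.2.2.symm
    | succ r => simp
  · intro g _
    funext r
    simp

private lemma card_inj_pi (k : ℕ) (B : Finset ℕ) :
    ((Fintype.piFinset fun _ : Fin k => B).filter fun g => Function.Injective g).card
      = B.card.descFactorial k := by
  induction k generalizing B with
  | zero =>
    rw [Nat.descFactorial_zero]
    rw [Finset.filter_true_of_mem (fun f _ => Function.injective_of_subsingleton f)]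
    rw [Fintype.card_piFinset]
    simp
  | succ k ih =>
    rw [Finset.card_eq_sum_card_fiberwise (f := fun f => f 0) (t := B)
      (fun f hf => by
        simp only [Finset.mem_coe, Finset.mem_filter, Fintype.mem_piFinset] at hf
        exact hf.1 0)]
    have hfib : ∀ a ∈ B,
        (((Fintype.piFinset fun _ : Fin (k + 1) => B).filter
            fun g => Function.Injective g).filter fun f => f 0 = a).card
          = (B.card - 1).descFactorial k := by
      intro a ha
      rw [Finset.filter_filter, fiber_card k B a ha, ih (B.erase a),
        Finset.card_erase_of_mem ha]
    rw [Finset.sum_congr rfl hfib, Finset.sum_const, smul_eq_mul]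
    rcases Nat.eq_zero_or_pos B.card with h0 | hpos
    · rw [h0]; simp
    · obtain ⟨c, hc⟩ := Nat.exists_eq_succ_of_ne_zero (Nat.pos_iff_ne_zero.mp hpos)
      rw [hc]; rw [Nat.succ_descFactorial_succ]; simp

private lemma card_inj_pi' (k : ℕ) (A B : Finset ℕ) (hAB : A ⊆ B) :
    ((Fintype.piFinset fun _ : Fin (k + 1) => B).filter
        fun f => Function.Injective f ∧ f 0 ∈ A).card
      = A.card * (B.card - 1).descFactorial k := by
  rw [Finset.card_eq_sum_card_fiberwise (f := fun f => f 0) (t := A)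
    (fun f hf => by
      simp only [Finset.mem_coe, Finset.mem_filter, Fintype.mem_piFinset] at hf
      exact hf.2.2)]
  have hfib : ∀ a ∈ A,
      (((Fintype.piFinset fun _ : Fin (k + 1) => B).filter
          fun f => Function.Injective f ∧ f 0 ∈ A).filter fun f => f 0 = a).card
        = (B.card - 1).descFactorial k := by
    intro a ha
    rw [Finset.filter_filter]
    have : ((Fintype.piFinset fun _ : Fin (k + 1) => B).filter
        fun f => (Function.Injective f ∧ f 0 ∈ A) ∧ f 0 = a)
        = ((Fintype.piFinset fun _ : Fin (k + 1) => B).filter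
        fun f => Function.Injective f ∧ f 0 = a) := by
      apply Finset.filter_congr
      intro f _
      constructor
      · rintro ⟨⟨h1, _⟩, h3⟩; exact ⟨h1, h3⟩
      · rintro ⟨h1, h3⟩; exact ⟨⟨h1, h3 ▸ ha⟩, h3⟩
    rw [this, fiber_card k B a (hAB ha), card_inj_pi k (B.erase a),
      Finset.card_erase_of_mem (hAB ha)]
  rw [Finset.sum_congr rfl hfib, Finset.sum_const, smul_eq_mul]

set_option maxHeartbeats 1000000 in
/-- For every `m ≥ 2` there is `s_m > 0` such that for every `s > s_m` there is
`N₀` (independent of the sequence) with `R_m(s/3,N) ≤ (6/s)·R_{m+1}(s,N)` for every sequence in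
`[0,1]` and every `N ≥ N₀`. -/
theorem Rm_le_Rm_succ
    (m : ℕ) (hm : 2 ≤ m) :
    ∃ sm : ℝ, 0 < sm ∧ ∀ s : ℝ, sm < s → ∃ N₀ : ℕ,
      ∀ x : ℕ → ℝ, (∀ n, x n ∈ Set.Icc (0 : ℝ) 1) → ∀ N : ℕ, N₀ ≤ N →
        Rcorr x m N (fun _ => s / 3) ≤ 6 / s * Rcorr x (m + 1) N (fun _ => s) := by
  obtain ⟨n, rfl⟩ : ∃ n, m = n + 2 := ⟨m - 2, by omega⟩
  refine ⟨6 * (n + 2), by positivity, fun s hs => ⟨⌈s⌉₊ + 1, fun x hx N hN => ?_⟩⟩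
  have hs0 : (0 : ℝ) < s := lt_trans (by positivity) hs
  have hsN : s < N := by
    have h1 : (⌈s⌉₊ : ℝ) < N := by exact_mod_cast Nat.lt_of_lt_of_le (Nat.lt_succ_self _) hN
    linarith [Nat.le_ceil s]
  have hN0 : (0 : ℝ) < N := lt_trans hs0 hsN
  set K : ℕ := ⌊3 * (N : ℝ) / s⌋₊ with hKdef
  have hKle : (K : ℝ) ≤ 3 * N / s := Nat.floor_le (by positivity)
  have hKle' : (K : ℝ) * s ≤ 3 * N := (le_div_iff₀ hs0).mp hKle
  have hK3 : 3 ≤ K := by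
    apply Nat.le_floor
    rw [le_div_iff₀ hs0]
    push_cast
    nlinarith
  have hK0 : (0 : ℝ) < K := by
    have : (3 : ℝ) ≤ K := by exact_mod_cast hK3
    linarith
  haveI : NeZero K := ⟨by omega⟩
  have hKge : 2 * (N : ℝ) ≤ s * K := by
    have h1 : 3 * (N : ℝ) / s < K + 1 := by
      linarith [Nat.sub_one_lt_floor (3 * (N : ℝ) / s)]
    have h2 : 3 * (N : ℝ) < s * (K + 1) := by
      rw [div_lt_iff₀ hs0] at h1
      linarith
    nlinarith
  have hL1 : s / (3 * N) ≤ 1 / K := by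
    rw [div_le_div_iff₀ (by positivity) hK0]
    nlinarith
  have hL2 : 2 / (K : ℝ) ≤ s / N := by
    rw [div_le_div_iff₀ hK0 hN0]
    nlinarith
  have hfr : ∀ i : ℕ, (0 : ℝ) ≤ Int.fract (x i) ∧ Int.fract (x i) < 1 :=
    fun i => ⟨Int.fract_nonneg _, Int.fract_lt_one _⟩
  set T : ℕ → ℤ := fun i => ⌊Int.fract (x i) * K⌋ with hTdef
  set idx : ℕ → ZMod K := fun i => ((T i : ℤ) : ZMod K) with hidxdef
  have hTlb : ∀ i, (T i : ℝ) ≤ Int.fract (x i) * K := fun i => Int.floor_le _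
  have hTub : ∀ i, Int.fract (x i) * K < T i + 1 := fun i => Int.lt_floor_add_one _
  have hT0 : ∀ i, 0 ≤ T i := fun i => Int.floor_nonneg.mpr (mul_nonneg (hfr i).1 hK0.le)
  have hTK : ∀ i, T i ≤ (K : ℤ) - 1 := by
    intro i
    have h1 : T i < (K : ℤ) := by
      apply Int.floor_lt.mpr
      push_cast
      nlinarith [(hfr i).2, (hfr i).1]
    omega
  have hidxeq : ∀ i, idx i = ((T i : ℤ) : ZMod K) := fun _ => rfl
  have hKinv : (1 / (K : ℝ)) * K = 1 := one_div_mul_cancel (ne_of_gt hK0)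
  -- Claim B : close points have (cyclically) adjacent interval indices
  have claimB : ∀ i j : ℕ, nint (x i - x j) ≤ s / (3 * N) →
      (idx j = idx i - 1 ∨ idx j = idx i ∨ idx j = idx i + 1) := by
    intro i j hnint
    have hK13 : (1 : ℝ) / K ≤ 1 / 3 := by
      rw [div_le_div_iff₀ hK0 (by norm_num)]
      have : (3 : ℝ) ≤ K := by exact_mod_cast hK3
      linarith
    set a := Int.fract (x i) with hadef
    set b := Int.fract (x j) with hbdef
    set k0 : ℤ := round (x i - x j) - ⌊x i⌋ + ⌊x j⌋ with hk0def
    have key : |a - b - (k0 : ℝ)| ≤ 1 / K := by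
      have e1 : a - b - (k0 : ℝ) = (x i - x j) - round (x i - x j) := by
        rw [hk0def, hadef, hbdef, ← Int.self_sub_floor, ← Int.self_sub_floor]
        push_cast
        ring
      rw [e1]
      exact le_trans hnint hL1
    have hk0 : k0 = -1 ∨ k0 = 0 ∨ k0 = 1 := by
      have h2 : |(k0 : ℝ)| < 2 := by
        have h3 : |(k0 : ℝ)| ≤ |a - b| + |a - b - k0| := by
          calc |(k0 : ℝ)| = |(a - b) - (a - b - k0)| := by ring_nf
            _ ≤ |a - b| + |a - b - k0| := abs_sub _ _
        have h4 : |a - b| < 1 := by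
          rw [abs_lt]
          constructor <;> nlinarith [(hfr i).1, (hfr i).2, (hfr j).1, (hfr j).2]
        linarith
      have h5 : |k0| < 2 := by exact_mod_cast h2
      rw [abs_lt] at h5
      omega
    rw [abs_le] at key
    rcases hk0 with hk | hk | hk
    · -- k0 = -1 : b is near 1, a is near 0
      rw [hk] at key
      push_cast at key
      have hb1 : 1 - 1 / (K : ℝ) ≤ b := by
        have := (hfr i).1
        linarith [key.2]
      have ha1 : a < 1 / (K : ℝ) := by
        have := (hfr j).2
        linarith [key.2]
      have hTj : T j = (K : ℤ) - 1 := by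
        have h1 : ((K : ℤ) - 1 : ℤ) ≤ T j := by
          apply Int.le_floor.mpr
          push_cast
          rw [← hbdef]
          nlinarith [hb1, hK0, hKinv]
        have := hTK j
        omega
      have hTi : T i = 0 := by
        have h1 : T i < 1 := by
          apply Int.floor_lt.mpr
          push_cast
          rw [← hadef]
          nlinarith [ha1, hK0, hKinv]
        have := hT0 i
        omega
      left
      rw [hidxeq j, hidxeq i, hTj, hTi]
      push_cast
      simp
    · -- k0 = 0
      rw [hk] at key
      push_cast at key
      have h1 : T j < T i + 2 := by
        have : (T j : ℝ) < (T i : ℝ) + 2 := by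
          nlinarith [hTlb j, hTub i, key.1, key.2, hK0, hKinv]
        exact_mod_cast this
      have h2 : T i < T j + 2 := by
        have : (T i : ℝ) < (T j : ℝ) + 2 := by
          nlinarith [hTlb i, hTub j, key.1, key.2, hK0, hKinv]
        exact_mod_cast this
      have h3 : T j = T i - 1 ∨ T j = T i ∨ T j = T i + 1 := by omega
      rcases h3 with h | h | h
      · left; rw [hidxeq j, hidxeq i, h]; push_cast; ring
      · right; left; rw [hidxeq j, hidxeq i, h]
      · right; right; rw [hidxeq j, hidxeq i, h]; push_cast; ring
    · -- k0 = 1 : a is near 1, b is near 0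
      rw [hk] at key
      push_cast at key
      have ha1 : 1 - 1 / (K : ℝ) ≤ a := by
        have := (hfr j).1
        linarith [key.1]
      have hb1 : b < 1 / (K : ℝ) := by
        have := (hfr i).2
        linarith [key.1]
      have hTi : T i = (K : ℤ) - 1 := by
        have h1 : ((K : ℤ) - 1 : ℤ) ≤ T i := by
          apply Int.le_floor.mpr
          push_cast
          rw [← hadef]
          nlinarith [ha1, hK0, hKinv]
        have := hTK i
        omega
      have hTj : T j = 0 := by
        have h1 : T j < 1 := by
          apply Int.floor_lt.mpr
          push_cast
          rw [← hbdef]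
          nlinarith [hb1, hK0, hKinv]
        have := hT0 j
        omega
      right; right
      rw [hidxeq j, hidxeq i, hTj, hTi]
      push_cast
      simp
  -- Claim A : points in cyclically adjacent intervals are within distance s/N
  have claimA : ∀ i j : ℕ,
      (idx j = idx i - 1 ∨ idx j = idx i ∨ idx j = idx i + 1) → nint (x i - x j) ≤ s / N := by
    intro i j hidx
    obtain ⟨e, he, hje⟩ : ∃ e : ℤ, (e = -1 ∨ e = 0 ∨ e = 1) ∧
        (((T j : ℤ) : ZMod K) = ((T i + e : ℤ) : ZMod K)) := by
      rcases hidx with h | h | h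
      · refine ⟨-1, Or.inl rfl, ?_⟩
        rw [hidxeq j, hidxeq i] at h
        push_cast
        rw [h]
        ring
      · refine ⟨0, Or.inr (Or.inl rfl), ?_⟩
        rw [hidxeq j, hidxeq i] at h
        push_cast
        rw [h]
        ring
      · refine ⟨1, Or.inr (Or.inr rfl), ?_⟩
        rw [hidxeq j, hidxeq i] at h
        push_cast
        rw [h]
    have hdvd : (K : ℤ) ∣ (T j - T i - e) := by
      have h0 : ((T j - T i - e : ℤ) : ZMod K) = 0 := by
        push_cast
        push_cast at hje
        rw [hje]
        ring
      exact (ZMod.intCast_zmod_eq_zero_iff_dvd _ K).mp h0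
    obtain ⟨q, hq⟩ := hdvd
    have hKz : (3 : ℤ) ≤ K := by exact_mod_cast hK3
    have hTi0 := hT0 i; have hTiK := hTK i; have hTj0 := hT0 j; have hTjK := hTK j
    have hq1 : q = -1 ∨ q = 0 ∨ q = 1 := by
      have hb1 : -(K : ℤ) ≤ (K : ℤ) * q := by rw [← hq]; omega
      have hb2 : (K : ℤ) * q ≤ K := by rw [← hq]; omega
      have hq2 : q ≤ 1 := le_of_mul_le_mul_left (by linarith) (by omega : (0 : ℤ) < K)
      have hq3 : -1 ≤ q := le_of_mul_le_mul_left (by linarith) (by omega : (0 : ℤ) < K)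
      omega
    set a := Int.fract (x i) with hadef
    set b := Int.fract (x j) with hbdef
    have hfi : x i - (⌊x i⌋ : ℝ) = a := by rw [hadef, Int.self_sub_floor]
    have hfj : x j - (⌊x j⌋ : ℝ) = b := by rw [hbdef, Int.self_sub_floor]
    suffices hsuff : ∃ k' : ℤ, |(x i - x j) - (k' : ℝ)| ≤ 2 / K by
      obtain ⟨k', hk'⟩ := hsuff
      exact le_trans (le_trans (nint_le_abs _ k') hk') hL2
    rcases hq1 with hqv | hqv | hqv
    · -- q = -1 : T j = T i + e - K, forcing T i = K-1, T j = 0, e = 1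
      have hcase : T i = (K : ℤ) - 1 ∧ T j = 0 := by rw [hqv] at hq; omega
      refine ⟨⌊x i⌋ - ⌊x j⌋ + 1, ?_⟩
      have hz : (x i - x j) - ((⌊x i⌋ - ⌊x j⌋ + 1 : ℤ) : ℝ) = a - b - 1 := by
        push_cast
        rw [← hfi, ← hfj]
        ring
      rw [hz, abs_le]
      have e1 : ((K : ℝ) - 1) ≤ a * K := by
        have := hTlb i
        rw [hcase.1] at this
        push_cast at this
        linarith
      have e2 : b * K < 1 := by
        have := hTub j
        rw [hcase.2] at this
        push_cast at this
        linarith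
      constructor
      · rw [neg_le, le_div_iff₀ hK0]
        nlinarith [(hfr i).2, (hfr j).1, e1, e2, hK0]
      · rw [le_div_iff₀ hK0]
        nlinarith [(hfr i).2, (hfr j).1, e1, e2, hK0]
    · -- q = 0 : T j = T i + e
      have hcase : T j = T i + e := by rw [hqv] at hq; omega
      refine ⟨⌊x i⌋ - ⌊x j⌋, ?_⟩
      have hz : (x i - x j) - ((⌊x i⌋ - ⌊x j⌋ : ℤ) : ℝ) = a - b := by
        push_cast
        rw [← hfi, ← hfj]
        ring
      rw [hz, abs_le]
      have e1 : a * K < (T i : ℝ) + 1 := hTub i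
      have e2 : (T i : ℝ) ≤ a * K := hTlb i
      have e3 : b * K < (T j : ℝ) + 1 := hTub j
      have e4 : (T j : ℝ) ≤ b * K := hTlb j
      have h6 : (-1 : ℤ) ≤ T i - T j ∧ T i - T j ≤ 1 := by
        rcases he with rfl | rfl | rfl <;> omega
      have e5 : (-1 : ℝ) ≤ (T i : ℝ) - T j ∧ ((T i : ℝ) - T j) ≤ 1 := by
        constructor
        · exact_mod_cast h6.1
        · exact_mod_cast h6.2
      constructor
      · rw [neg_le, le_div_iff₀ hK0]
        nlinarith [e1, e2, e3, e4, e5.1, e5.2, hK0]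
      · rw [le_div_iff₀ hK0]
        nlinarith [e1, e2, e3, e4, e5.1, e5.2, hK0]
    · -- q = 1 : T j = T i + e + K, forcing T i = 0, T j = K-1, e = -1
      have hcase : T i = 0 ∧ T j = (K : ℤ) - 1 := by rw [hqv] at hq; omega
      refine ⟨⌊x i⌋ - ⌊x j⌋ - 1, ?_⟩
      have hz : (x i - x j) - ((⌊x i⌋ - ⌊x j⌋ - 1 : ℤ) : ℝ) = a - b + 1 := by
        push_cast
        rw [← hfi, ← hfj]
        ring
      rw [hz, abs_le]
      have e1 : ((K : ℝ) - 1) ≤ b * K := by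
        have := hTlb j
        rw [hcase.2] at this
        push_cast at this
        linarith
      have e2 : a * K < 1 := by
        have := hTub i
        rw [hcase.1] at this
        push_cast at this
        linarith
      constructor
      · rw [neg_le, le_div_iff₀ hK0]
        nlinarith [(hfr j).2, (hfr i).1, e1, e2, hK0]
      · rw [le_div_iff₀ hK0]
        nlinarith [(hfr j).2, (hfr i).1, e1, e2, hK0]
  -- interval classes and windows
  set P : ZMod K → Finset ℕ := fun t => (Finset.Icc 1 N).filter (fun i => idx i = t) with hPdef
  set W : ZMod K → Finset ℕ := fun t => (Finset.Icc 1 N).filter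
      (fun i => idx i = t - 1 ∨ idx i = t ∨ idx i = t + 1) with hWdef
  have hPW : ∀ t, P t ⊆ W t := by
    intro t i hi
    simp only [hPdef, hWdef, Finset.mem_filter] at hi ⊢
    exact ⟨hi.1, Or.inr (Or.inl hi.2)⟩
  have hWsub : ∀ t, W t ⊆ Finset.Icc 1 N := by
    intro t
    simp only [hWdef]
    exact Finset.filter_subset _ _
  have hsumP : ∑ t : ZMod K, (P t).card = N := by
    have h := Finset.card_eq_sum_card_fiberwise
      (s := Finset.Icc 1 N) (t := (Finset.univ : Finset (ZMod K))) (f := idx)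
      (fun i _ => Finset.mem_univ _)
    rw [Nat.card_Icc] at h
    simpa [hPdef] using h.symm
  have hsumFib : ∀ F : ZMod K → ℝ,
      ∑ i ∈ Finset.Icc 1 N, F (idx i) = ∑ t : ZMod K, ((P t).card : ℝ) * F t := by
    intro F
    rw [← Finset.sum_fiberwise_of_maps_to (g := idx)
      (fun i (_ : i ∈ Finset.Icc 1 N) => Finset.mem_univ (idx i)) (f := fun i => F (idx i))]
    refine Finset.sum_congr rfl fun t _ => ?_
    have h1 : ∀ i ∈ (Finset.Icc 1 N).filter (fun i => idx i = t),
        F (idx i) = F t := by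
      intro i hi
      rw [(Finset.mem_filter.mp hi).2]
    rw [Finset.sum_congr rfl h1, Finset.sum_const, nsmul_eq_mul]
  -- counting : upper bound for the m-tuples
  set F1 := (Fintype.piFinset fun _ : Fin (n + 2) => Finset.Icc 1 N).filter
      (fun f => Function.Injective f ∧ ∀ r : Fin (n + 1),
        nint (x (f 0) - x (f r.succ)) ≤ s / 3 / N) with hF1def
  set F2 := (Fintype.piFinset fun _ : Fin (n + 3) => Finset.Icc 1 N).filter
      (fun f => Function.Injective f ∧ ∀ r : Fin (n + 2),
        nint (x (f 0) - x (f r.succ)) ≤ s / N) with hF2def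
  have hU : F1.card ≤ ∑ t : ZMod K, (P t).card * ((W t).card - 1).descFactorial (n + 1) := by
    rw [Finset.card_eq_sum_card_fiberwise (f := fun f => idx (f 0))
      (t := (Finset.univ : Finset (ZMod K))) (fun f _ => Finset.mem_univ _)]
    apply Finset.sum_le_sum
    intro t _
    refine le_trans (Finset.card_le_card ?_)
      (le_of_eq (card_inj_pi' (n + 1) (P t) (W t) (hPW t)))
    intro f hf
    simp only [hF1def, Finset.mem_filter, Fintype.mem_piFinset] at hf
    obtain ⟨⟨hmem, hinj, hcond⟩, hidx0⟩ := hf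
    have hf0P : f 0 ∈ P t := by
      simp only [hPdef, Finset.mem_filter]
      exact ⟨hmem 0, hidx0⟩
    simp only [Finset.mem_filter, Fintype.mem_piFinset]
    refine ⟨fun j => ?_, hinj, hf0P⟩
    induction j using Fin.cases with
    | zero => exact hPW t hf0P
    | succ r =>
      simp only [hWdef, Finset.mem_filter]
      refine ⟨hmem _, ?_⟩
      rw [← hidx0]
      apply claimB (f 0) (f r.succ)
      rw [← div_div]
      exact hcond r
  -- counting : lower bound for the (m+1)-tuples
  have hLo : ∑ t : ZMod K, (P t).card * ((W t).card - 1).descFactorial (n + 2) ≤ F2.card := by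
    set V : ZMod K → Finset (Fin (n + 3) → ℕ) := fun t =>
      (Fintype.piFinset fun _ : Fin (n + 3) => W t).filter
        (fun f => Function.Injective f ∧ f 0 ∈ P t) with hVdef
    have hVcard : ∀ t, (V t).card = (P t).card * ((W t).card - 1).descFactorial (n + 2) :=
      fun t => card_inj_pi' (n + 2) (P t) (W t) (hPW t)
    have hVsub : ∀ t, V t ⊆ F2 := by
      intro t f hf
      simp only [hVdef, Finset.mem_filter, Fintype.mem_piFinset] at hf
      obtain ⟨hmem, hinj, hf0P⟩ := hf
      have hidx0 : idx (f 0) = t := by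
        simp only [hPdef, Finset.mem_filter] at hf0P
        exact hf0P.2
      simp only [hF2def, Finset.mem_filter, Fintype.mem_piFinset]
      refine ⟨fun j => hWsub t (hmem j), hinj, fun r => ?_⟩
      apply claimA (f 0) (f r.succ)
      rw [hidx0]
      have := hmem r.succ
      simp only [hWdef, Finset.mem_filter] at this
      exact this.2
    have hVdisj : ∀ t ∈ (Finset.univ : Finset (ZMod K)), ∀ t' ∈ Finset.univ,
        t ≠ t' → Disjoint (V t) (V t') := by
      intro t _ t' _ hne
      rw [Finset.disjoint_left]
      intro f hft hft'
      apply hne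
      simp only [hVdef, Finset.mem_filter, hPdef] at hft hft'
      rw [← hft.2.2.2, ← hft'.2.2.2]
    calc ∑ t : ZMod K, (P t).card * ((W t).card - 1).descFactorial (n + 2)
        = ∑ t : ZMod K, (V t).card := (Finset.sum_congr rfl fun t _ => (hVcard t).symm)
      _ = (Finset.univ.biUnion V).card := (Finset.card_biUnion hVdisj).symm
      _ ≤ F2.card := Finset.card_le_card (Finset.biUnion_subset.mpr fun t _ => hVsub t)
  -- the Chebyshev step
  have hcheb : (s / 6) * ∑ t : ZMod K, ((P t).card : ℝ) * (((W t).card - 1).descFactorial (n + 1) : ℝ)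
      ≤ ∑ t : ZMod K, ((P t).card : ℝ) * (((W t).card - 1).descFactorial (n + 2) : ℝ) := by
    set u : ℕ → ℝ := fun i => (((W (idx i)).card - 1).descFactorial (n + 1) : ℝ) with hudef
    set v : ℕ → ℝ := fun i => ((W (idx i)).card : ℝ) - (n + 2) with hvdef
    have hmono : MonovaryOn u v (Finset.Icc 1 N : Finset ℕ) := by
      intro i _ j hj hvij
      simp only [hudef]
      have h1 : (W (idx i)).card ≤ (W (idx j)).card := by
        simp only [hvdef] at hvij
        have : ((W (idx i)).card : ℝ) < ((W (idx j)).card : ℝ) := by linarith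
        exact_mod_cast this.le
      exact_mod_cast Nat.descFactorial_le (n + 1) (by omega)
    have hcheb0 := hmono.sum_mul_sum_le_card_mul_sum
    have hcard : ((Finset.Icc 1 N).card : ℕ) = N := by rw [Nat.card_Icc]; omega
    have hsum_u : ∑ i ∈ Finset.Icc 1 N, u i
        = ∑ t : ZMod K, ((P t).card : ℝ) * (((W t).card - 1).descFactorial (n + 1) : ℝ) :=
      hsumFib (fun t => (((W t).card - 1).descFactorial (n + 1) : ℝ))
    have hsum_uv : ∑ i ∈ Finset.Icc 1 N, u i * v i
        = ∑ t : ZMod K, ((P t).card : ℝ)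
            * ((((W t).card - 1).descFactorial (n + 1) : ℝ) * (((W t).card : ℝ) - (n + 2))) :=
      hsumFib (fun t => (((W t).card - 1).descFactorial (n + 1) : ℝ) * (((W t).card : ℝ) - (n + 2)))
    have hsum_v : ∑ i ∈ Finset.Icc 1 N, v i
        = ∑ t : ZMod K, ((P t).card : ℝ) * (((W t).card : ℝ) - (n + 2)) :=
      hsumFib (fun t => ((W t).card : ℝ) - (n + 2))
    have hsumu_nn : 0 ≤ ∑ i ∈ Finset.Icc 1 N, u i :=
      Finset.sum_nonneg fun i _ => by simp only [hudef]; positivity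
    -- lower bound for ∑ v
    have hsumPcast : ∑ t : ZMod K, ((P t).card : ℝ) = N := by
      rw [← Nat.cast_sum]
      exact_mod_cast congrArg (Nat.cast : ℕ → ℝ) hsumP
    have hsumv_ge : (N : ℝ) * (s / 6) ≤ ∑ i ∈ Finset.Icc 1 N, v i := by
      rw [hsum_v]
      have e1 : ∑ t : ZMod K, ((P t).card : ℝ) * (((W t).card : ℝ) - (n + 2))
          = (∑ t : ZMod K, ((P t).card : ℝ) * ((W t).card : ℝ))
            - (n + 2) * ∑ t : ZMod K, ((P t).card : ℝ) := by
        rw [Finset.mul_sum, ← Finset.sum_sub_distrib]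
        exact Finset.sum_congr rfl fun t _ => by ring
      have e2 : ∑ t : ZMod K, ((P t).card : ℝ) * ((P t).card : ℝ)
          ≤ ∑ t : ZMod K, ((P t).card : ℝ) * ((W t).card : ℝ) := by
        apply Finset.sum_le_sum
        intro t _
        have h1 : ((P t).card : ℝ) ≤ ((W t).card : ℝ) := by
          exact_mod_cast Finset.card_le_card (hPW t)
        have h2 : (0 : ℝ) ≤ ((P t).card : ℝ) := Nat.cast_nonneg _
        exact mul_le_mul_of_nonneg_left h1 h2
      have e3 : ((N : ℝ)) ^ 2 ≤ (K : ℝ) * ∑ t : ZMod K, ((P t).card : ℝ) * ((P t).card : ℝ) := by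
        have h := sq_sum_le_card_mul_sum_sq
          (s := (Finset.univ : Finset (ZMod K))) (f := fun t => ((P t).card : ℝ))
        rw [Finset.card_univ, ZMod.card, hsumPcast] at h
        calc ((N : ℝ)) ^ 2 ≤ (K : ℝ) * ∑ t : ZMod K, ((P t).card : ℝ) ^ 2 := h
          _ = (K : ℝ) * ∑ t : ZMod K, ((P t).card : ℝ) * ((P t).card : ℝ) := by
            congr 1
            exact Finset.sum_congr rfl fun t _ => by ring
      rw [e1, hsumPcast]
      -- K * (∑ cM) ≥ K * (∑ c²) ≥ N² and s*K ≤ 3N give ∑ cM ≥ N*s/3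
      have h5 : (K : ℝ) * ((N : ℝ) * (s / 3)) ≤ ((N : ℝ)) ^ 2 := by
        have h5a : ((N : ℝ) / 3) * ((K : ℝ) * s) ≤ ((N : ℝ) / 3) * (3 * (N : ℝ)) :=
          mul_le_mul_of_nonneg_left hKle' (by positivity)
        calc (K : ℝ) * ((N : ℝ) * (s / 3)) = ((N : ℝ) / 3) * ((K : ℝ) * s) := by ring
          _ ≤ ((N : ℝ) / 3) * (3 * (N : ℝ)) := h5a
          _ = ((N : ℝ)) ^ 2 := by ring
      have e4 : (K : ℝ) * ((N : ℝ) * (s / 3))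
          ≤ (K : ℝ) * ∑ t : ZMod K, ((P t).card : ℝ) * ((W t).card : ℝ) :=
        le_trans (le_trans h5 e3) (mul_le_mul_of_nonneg_left e2 hK0.le)
      have e5 : (N : ℝ) * (s / 3) ≤ ∑ t : ZMod K, ((P t).card : ℝ) * ((W t).card : ℝ) :=
        le_of_mul_le_mul_left e4 hK0
      have e6 : 6 * ((n : ℝ) + 2) ≤ s := hs.le
      have e7 : (N : ℝ) * (s / 3) - (N : ℝ) * (s / 6) - ((n : ℝ) + 2) * N
          = (N : ℝ) * (s / 3 - s / 6 - ((n : ℝ) + 2)) := by ring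
      have e8 : 0 ≤ (N : ℝ) * (s / 3 - s / 6 - ((n : ℝ) + 2)) :=
        mul_nonneg hN0.le (by linarith)
      linarith
    -- combine Chebyshev
    have h7 : (s / 6) * ∑ i ∈ Finset.Icc 1 N, u i ≤ ∑ i ∈ Finset.Icc 1 N, u i * v i := by
      have h8 : (∑ i ∈ Finset.Icc 1 N, u i) * ((N : ℝ) * (s / 6))
          ≤ (∑ i ∈ Finset.Icc 1 N, u i) * ∑ i ∈ Finset.Icc 1 N, v i :=
        mul_le_mul_of_nonneg_left hsumv_ge hsumu_nn
      have h9 : ((Finset.Icc 1 N).card : ℝ) = (N : ℝ) := by exact_mod_cast hcard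
      have h10 := hcheb0
      rw [h9] at h10
      have h11 : (N : ℝ) * ((s / 6) * ∑ i ∈ Finset.Icc 1 N, u i)
          ≤ (N : ℝ) * ∑ i ∈ Finset.Icc 1 N, u i * v i := by
        calc (N : ℝ) * ((s / 6) * ∑ i ∈ Finset.Icc 1 N, u i)
            = (∑ i ∈ Finset.Icc 1 N, u i) * ((N : ℝ) * (s / 6)) := by ring
          _ ≤ (∑ i ∈ Finset.Icc 1 N, u i) * ∑ i ∈ Finset.Icc 1 N, v i := h8
          _ ≤ (N : ℝ) * ∑ i ∈ Finset.Icc 1 N, u i * v i := h10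
      exact le_of_mul_le_mul_left h11 hN0
    rw [hsum_u, hsum_uv] at h7
    refine le_trans h7 (Finset.sum_le_sum fun t _ => ?_)
    have hdesc : (((W t).card - 1).descFactorial (n + 2) : ℕ)
        = ((W t).card - 1 - (n + 1)) * ((W t).card - 1).descFactorial (n + 1) :=
      Nat.descFactorial_succ _ _
    have hsub : ((W t).card : ℝ) - (n + 2) ≤ (((W t).card - 1 - (n + 1) : ℕ) : ℝ) := by
      rcases le_or_gt (n + 2) (W t).card with h | h
      · rw [show (W t).card - 1 - (n + 1) = (W t).card - (n + 2) by omega]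
        rw [Nat.cast_sub h]
        push_cast
        linarith
      · have h1 : ((W t).card : ℝ) < (n : ℝ) + 2 := by exact_mod_cast h
        have h2 : (0 : ℝ) ≤ (((W t).card - 1 - (n + 1) : ℕ) : ℝ) := Nat.cast_nonneg _
        linarith
    have h11 : (0 : ℝ) ≤ (((W t).card - 1).descFactorial (n + 1) : ℝ) := Nat.cast_nonneg _
    have h12 : (0 : ℝ) ≤ ((P t).card : ℝ) := Nat.cast_nonneg _
    refine mul_le_mul_of_nonneg_left ?_ h12
    calc (((W t).card - 1).descFactorial (n + 1) : ℝ) * (((W t).card : ℝ) - (n + 2))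
        ≤ (((W t).card - 1).descFactorial (n + 1) : ℝ) * (((W t).card - 1 - (n + 1) : ℕ) : ℝ) :=
          mul_le_mul_of_nonneg_left hsub h11
      _ = (((W t).card - 1).descFactorial (n + 2) : ℝ) := by
          rw [hdesc]
          push_cast
          ring
  -- final assembly
  have e1 : Rcorr x (n + 2) N (fun _ => s / 3) = (F1.card : ℝ) / N := by rw [hF1def]; rfl
  have e2 : Rcorr x (n + 2 + 1) N (fun _ => s) = (F2.card : ℝ) / N := by rw [hF2def]; rfl
  rw [e1, e2]
  have hUc : (F1.card : ℝ)
      ≤ ∑ t : ZMod K, ((P t).card : ℝ) * (((W t).card - 1).descFactorial (n + 1) : ℝ) := by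
    calc (F1.card : ℝ)
        ≤ ((∑ t : ZMod K, (P t).card * ((W t).card - 1).descFactorial (n + 1) : ℕ) : ℝ) := by
          exact_mod_cast hU
      _ = _ := by push_cast; rfl
  have hLc : ∑ t : ZMod K, ((P t).card : ℝ) * (((W t).card - 1).descFactorial (n + 2) : ℝ)
      ≤ (F2.card : ℝ) := by
    calc ∑ t : ZMod K, ((P t).card : ℝ) * (((W t).card - 1).descFactorial (n + 2) : ℝ)
        = ((∑ t : ZMod K, (P t).card * ((W t).card - 1).descFactorial (n + 2) : ℕ) : ℝ) := by
          push_cast; rfl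
      _ ≤ (F2.card : ℝ) := by exact_mod_cast hLo
  have hkey : (F1.card : ℝ) * (s / 6) ≤ (F2.card : ℝ) := by
    calc (F1.card : ℝ) * (s / 6)
        ≤ (∑ t : ZMod K, ((P t).card : ℝ) * (((W t).card - 1).descFactorial (n + 1) : ℝ))
            * (s / 6) := by
          apply mul_le_mul_of_nonneg_right hUc (by positivity)
      _ = (s / 6) * ∑ t : ZMod K, ((P t).card : ℝ)
            * (((W t).card - 1).descFactorial (n + 1) : ℝ) := by ring
      _ ≤ ∑ t : ZMod K, ((P t).card : ℝ) * (((W t).card - 1).descFactorial (n + 2) : ℝ) := hcheb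
      _ ≤ (F2.card : ℝ) := hLc
  have hfinal : (F1.card : ℝ) ≤ 6 / s * (F2.card : ℝ) := by
    rw [div_mul_eq_mul_div, le_div_iff₀ hs0]
    nlinarith
  calc (F1.card : ℝ) / N ≤ (6 / s * (F2.card : ℝ)) / N := by gcongr
      _ = 6 / s * ((F2.card : ℝ) / N) := by ring
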